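/- Let Δ(x,y,z) = 72xyz - 16y³ + 4x²y² - 16x³z - 108z², and v = (y/2, 3z, 2xz - y²/2). Then Δ is invariant under the flow of v up to the divergence: v · ∇Δ = (∇ · v) Δ, i.e., the field v/Δ is divergence-free on the region where Δ ≠ 0: ∇ · (v/Δ) = 0. -/

import Mathlib

noncomputable section

/-- Points/vectors in ℝ³. -/
abbrev V3 := ℝ × ℝ × ℝ

/-- Partial derivative in the first coordinate. -/
def pd1 (f : V3 → ℝ) (p : V3) : ℝ := deriv (fun t => f (t, p.2.1, p.2.2)) p.1
/-- Partial derivative in the second coordinate. -/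
def pd2 (f : V3 → ℝ) (p : V3) : ℝ := deriv (fun t => f (p.1, t, p.2.2)) p.2.1
/-- Partial derivative in the third coordinate. -/
def pd3 (f : V3 → ℝ) (p : V3) : ℝ := deriv (fun t => f (p.1, p.2.1, t)) p.2.2

/-- Gradient of a scalar function on ℝ³. -/
def grad (f : V3 → ℝ) (p : V3) : V3 := (pd1 f p, pd2 f p, pd3 f p)

/-- Euclidean dot product on ℝ³. -/
def dot (a b : V3) : ℝ := a.1 * b.1 + a.2.1 * b.2.1 + a.2.2 * b.2.2

/-- Cross product on ℝ³. -/
def cross (a b : V3) : V3 :=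
  (a.2.1 * b.2.2 - a.2.2 * b.2.1,
   a.2.2 * b.1 - a.1 * b.2.2,
   a.1 * b.2.1 - a.2.1 * b.1)

/-- Curl of a vector field on ℝ³. -/
def curl (F : V3 → V3) (p : V3) : V3 :=
  (pd2 (fun q => (F q).2.2) p - pd3 (fun q => (F q).2.1) p,
   pd3 (fun q => (F q).1) p - pd1 (fun q => (F q).2.2) p,
   pd1 (fun q => (F q).2.1) p - pd2 (fun q => (F q).1) p)

/-- Divergence of a vector field on ℝ³. -/
def diverg (F : V3 → V3) (p : V3) : ℝ :=
  pd1 (fun q => (F q).1) p + pd2 (fun q => (F q).2.1) p + pd3 (fun q => (F q).2.2) p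

/-- Jacobi–Lie bracket of vector fields on ℝ³ (componentwise `(X·∇)Y - (Y·∇)X`). -/
def lie (X Y : V3 → V3) (p : V3) : V3 :=
  (dot (X p) (grad (fun q => (Y q).1) p) - dot (Y p) (grad (fun q => (X q).1) p),
   dot (X p) (grad (fun q => (Y q).2.1) p) - dot (Y p) (grad (fun q => (X q).2.1) p),
   dot (X p) (grad (fun q => (Y q).2.2) p) - dot (Y p) (grad (fun q => (X q).2.2) p))

/-- The Darboux–Halphen vector field in symmetric polynomial coordinates. -/
def vDH (p : V3) : V3 :=
  (p.2.1 / 2, 3 * p.2.2, 2 * p.1 * p.2.2 - p.2.1 ^ 2 / 2)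

/-- The Darboux–Halphen discriminant Δ. -/
def ΔDH (p : V3) : ℝ :=
  72 * p.1 * p.2.1 * p.2.2 - 16 * p.2.1 ^ 3 + 4 * p.1 ^ 2 * p.2.1 ^ 2
    - 16 * p.1 ^ 3 * p.2.2 - 108 * p.2.2 ^ 2

lemma cubicHasDeriv (a b c d x : ℝ) :
    HasDerivAt (fun t : ℝ => a * t + b * t ^ 2 + c * t ^ 3 + d)
      (a + 2 * b * x + 3 * c * x ^ 2) x := by
  have h1 : HasDerivAt (fun t : ℝ => t) 1 x := hasDerivAt_id x
  have h2 := hasDerivAt_pow 2 x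
  have h3 := hasDerivAt_pow 3 x
  have := (((h1.const_mul a).add (h2.const_mul b)).add (h3.const_mul c)).add_const d
  exact this.congr_deriv (by push_cast; ring)

lemma g1HasDeriv (x y z : ℝ) :
    HasDerivAt (fun t : ℝ => ΔDH (t, y, z))
      (72 * y * z + 8 * x * y ^ 2 - 48 * x ^ 2 * z) x := by
  have he : (fun t : ℝ => ΔDH (t, y, z)) =
      fun t : ℝ => (72 * y * z) * t + (4 * y ^ 2) * t ^ 2 + (-16 * z) * t ^ 3
        + (-16 * y ^ 3 - 108 * z ^ 2) := by
    funext t; simp [ΔDH]; ring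
  rw [he]
  convert cubicHasDeriv (72 * y * z) (4 * y ^ 2) (-16 * z) (-16 * y ^ 3 - 108 * z ^ 2) x using 1
  ring

lemma g2HasDeriv (x y z : ℝ) :
    HasDerivAt (fun t : ℝ => ΔDH (x, t, z))
      (72 * x * z + 8 * x ^ 2 * y - 48 * y ^ 2) y := by
  have he : (fun t : ℝ => ΔDH (x, t, z)) =
      fun t : ℝ => (72 * x * z) * t + (4 * x ^ 2) * t ^ 2 + (-16) * t ^ 3
        + (-16 * x ^ 3 * z - 108 * z ^ 2) := by
    funext t; simp [ΔDH]; ring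
  rw [he]
  convert cubicHasDeriv (72 * x * z) (4 * x ^ 2) (-16) (-16 * x ^ 3 * z - 108 * z ^ 2) y using 1
  ring

lemma g3HasDeriv (x y z : ℝ) :
    HasDerivAt (fun t : ℝ => ΔDH (x, y, t))
      (72 * x * y - 16 * x ^ 3 - 216 * z) z := by
  have he : (fun t : ℝ => ΔDH (x, y, t)) =
      fun t : ℝ => (72 * x * y - 16 * x ^ 3) * t + (-108) * t ^ 2 + (0 : ℝ) * t ^ 3
        + (-16 * y ^ 3 + 4 * x ^ 2 * y ^ 2) := by
    funext t; simp [ΔDH]; ring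
  rw [he]
  convert cubicHasDeriv (72 * x * y - 16 * x ^ 3) (-108) 0 (-16 * y ^ 3 + 4 * x ^ 2 * y ^ 2) z using 1
  ring

/-- v·∇Δ = (∇·v)Δ, and v/Δ is divergence-free where Δ ≠ 0. -/
theorem stmt18 :
    (∀ p : V3, dot (vDH p) (grad ΔDH p) = diverg vDH p * ΔDH p) ∧
    (∀ p : V3, ΔDH p ≠ 0 → diverg (fun q : V3 => (ΔDH q)⁻¹ • vDH q) p = 0) := by
  constructor
  · rintro ⟨x, y, z⟩
    have h1 : pd1 ΔDH (x, y, z) = 72 * y * z + 8 * x * y ^ 2 - 48 * x ^ 2 * z :=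
      (g1HasDeriv x y z).deriv
    have h2 : pd2 ΔDH (x, y, z) = 72 * x * z + 8 * x ^ 2 * y - 48 * y ^ 2 :=
      (g2HasDeriv x y z).deriv
    have h3 : pd3 ΔDH (x, y, z) = 72 * x * y - 16 * x ^ 3 - 216 * z :=
      (g3HasDeriv x y z).deriv
    have hd : diverg vDH (x, y, z) = 2 * x := by
      have e1 : pd1 (fun q : V3 => (vDH q).1) (x, y, z) = 0 := by
        simp [pd1, vDH]
      have e2 : pd2 (fun q : V3 => (vDH q).2.1) (x, y, z) = 0 := by
        simp [pd2, vDH]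
      have e3 : pd3 (fun q : V3 => (vDH q).2.2) (x, y, z) = 2 * x := by
        have : HasDerivAt (fun t : ℝ => 2 * x * t - y ^ 2 / 2) (2 * x) z := by
          simpa using ((hasDerivAt_id z).const_mul (2 * x)).sub_const (y ^ 2 / 2)
        simpa [pd3, vDH] using this.deriv
      simp [diverg, e1, e2, e3]
    simp only [dot, grad, h1, h2, h3, hd, vDH, ΔDH]
    ring
  · rintro ⟨x, y, z⟩ hΔ
    simp only [ΔDH] at hΔ
    have hΔ' : ΔDH (x, y, z) ≠ 0 := by simpa [ΔDH] using hΔ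
    set D := ΔDH (x, y, z) with hD
    have f1 : HasDerivAt (fun t : ℝ => (ΔDH (t, y, z))⁻¹ * (y / 2))
        (-(72 * y * z + 8 * x * y ^ 2 - 48 * x ^ 2 * z) / D ^ 2 * (y / 2)) x :=
      ((g1HasDeriv x y z).inv hΔ').mul_const _
    have f2 : HasDerivAt (fun t : ℝ => (ΔDH (x, t, z))⁻¹ * (3 * z))
        (-(72 * x * z + 8 * x ^ 2 * y - 48 * y ^ 2) / D ^ 2 * (3 * z)) y :=
      ((g2HasDeriv x y z).inv hΔ').mul_const _
    have f3 : HasDerivAt (fun t : ℝ => (ΔDH (x, y, t))⁻¹ * (2 * x * t - y ^ 2 / 2))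
        (-(72 * x * y - 16 * x ^ 3 - 216 * z) / D ^ 2 * (2 * x * z - y ^ 2 / 2)
          + D⁻¹ * (2 * x)) z := by
      have hlin : HasDerivAt (fun t : ℝ => 2 * x * t - y ^ 2 / 2) (2 * x) z := by
        simpa using ((hasDerivAt_id z).const_mul (2 * x)).sub_const (y ^ 2 / 2)
      exact ((g3HasDeriv x y z).inv hΔ').mul hlin
    have e1 : pd1 (fun q : V3 => ((ΔDH q)⁻¹ • vDH q).1) (x, y, z)
        = -(72 * y * z + 8 * x * y ^ 2 - 48 * x ^ 2 * z) / D ^ 2 * (y / 2) := by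
      simpa [pd1, vDH, smul_eq_mul] using f1.deriv
    have e2 : pd2 (fun q : V3 => ((ΔDH q)⁻¹ • vDH q).2.1) (x, y, z)
        = -(72 * x * z + 8 * x ^ 2 * y - 48 * y ^ 2) / D ^ 2 * (3 * z) := by
      simpa [pd2, vDH, smul_eq_mul] using f2.deriv
    have e3 : pd3 (fun q : V3 => ((ΔDH q)⁻¹ • vDH q).2.2) (x, y, z)
        = -(72 * x * y - 16 * x ^ 3 - 216 * z) / D ^ 2 * (2 * x * z - y ^ 2 / 2)
          + D⁻¹ * (2 * x) := by
      simpa [pd3, vDH, smul_eq_mul] using f3.deriv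
    simp only [diverg]
    rw [e1, e2, e3]
    simp only [hD, ΔDH]
    field_simp
    ring
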